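/- Let X be a Banach space and M, N closed subspaces of X. Then M and N have a common complement in X if and only if there exist Banach spaces X₁, X₂ and bounded linear operators T, S : X₁ → X₂ such that the pair {M, N} is isomorphic to the pair {Gr(T), Gr(S)}, i.e. there is a bounded linear bijection with bounded inverse from X onto X₁ × X₂ mapping M onto the graph of T and N onto the graph of S. -/

import Mathlib

theorem aux14 {X : Type u} [NormedAddCommGroup X] [NormedSpace ℝ X] [CompleteSpace X]
    {M K : Submodule ℝ X} (hM : IsClosed (M : Set X))
    (e : X ≃L[ℝ] M × K) (he : ∀ (a : M) (b : K), e ((a : X) + (b : X)) = (a, b))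
    (N : Submodule ℝ X) (hN : IsClosed (N : Set X))
    (h1 : N ⊓ K = ⊥) (h2 : N ⊔ K = ⊤) :
    ∃ S : ↥M →L[ℝ] ↥K,
      Submodule.map ((e : X →L[ℝ] ↥M × ↥K) : X →ₗ[ℝ] ↥M × ↥K) N = LinearMap.graph (S : ↥M →ₗ[ℝ] ↥K) := by
  haveI : CompleteSpace M := hM.completeSpace_coe
  haveI : CompleteSpace N := hN.completeSpace_coe
  have he' : ∀ x : X, ((e x).1 : X) + ((e x).2 : X) = x := by
    intro x
    apply e.injective
    rw [he]
  set φ : ↥N →L[ℝ] ↥M :=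
    (ContinuousLinearMap.fst ℝ ↥M ↥K).comp ((e : X →L[ℝ] ↥M × ↥K).comp N.subtypeL) with hφ
  have hφ_apply : ∀ n : ↥N, φ n = (e (n : X)).1 := fun n => rfl
  have hbij : Function.Bijective φ := by
    constructor
    · intro n₁ n₂ hn
      have h1' : ((n₁ : X) - n₂) ∈ K := by
        have e1 := he' (n₁ : X)
        have e2 := he' (n₂ : X)
        have hfst : (e (n₁ : X)).1 = (e (n₂ : X)).1 := hn
        have hcoe : ((e (n₁ : X)).1 : X) = ((e (n₂ : X)).1 : X) := by rw [hfst]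
        have : ((n₁ : X) - n₂) = ((e (n₁ : X)).2 : X) - ((e (n₂ : X)).2 : X) := by
          conv_lhs => rw [← e1, ← e2]
          rw [hcoe]; abel
        rw [this]
        exact K.sub_mem (e (n₁ : X)).2.2 (e (n₂ : X)).2.2
      have h2' : ((n₁ : X) - n₂) ∈ N ⊓ K := ⟨N.sub_mem n₁.2 n₂.2, h1'⟩
      rw [h1] at h2'
      exact Subtype.ext (by rw [← sub_eq_zero]; exact h2')
    · intro m
      have : (m : X) ∈ N ⊔ K := by rw [h2]; trivial
      obtain ⟨n, hn, k, hk, hnk⟩ := Submodule.mem_sup.mp this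
      refine ⟨⟨n, hn⟩, ?_⟩
      have : (n : X) = (m : X) + ((-(⟨k, hk⟩ : K) : K) : X) := by
        simp only [Submodule.coe_neg]
        rw [← hnk]; abel
      rw [hφ_apply]
      simp only
      rw [this, he]
  set eqN : ↥N ≃ₗ[ℝ] ↥M := LinearEquiv.ofBijective (φ : ↥N →ₗ[ℝ] ↥M) hbij with heqN
  have hc : Continuous eqN := φ.continuous
  set ψ : ↥N ≃L[ℝ] ↥M := eqN.toContinuousLinearEquivOfContinuous hc with hψ
  have hψ_apply : ∀ n : ↥N, ψ n = (e (n : X)).1 := fun n => rfl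
  set S : ↥M →L[ℝ] ↥K :=
    ((ContinuousLinearMap.snd ℝ ↥M ↥K).comp ((e : X →L[ℝ] ↥M × ↥K).comp N.subtypeL)).comp
      (ψ.symm : ↥M →L[ℝ] ↥N) with hS
  have hS_apply : ∀ m : ↥M, S m = (e ((ψ.symm m : ↥N) : X)).2 := fun m => rfl
  refine ⟨S, ?_⟩
  ext p
  simp only [Submodule.mem_map, LinearMap.mem_graph_iff]
  constructor
  · rintro ⟨x, hx, rfl⟩
    show (e x).2 = S (e x).1
    have h := hψ_apply ⟨x, hx⟩
    rw [hS_apply, ← h, ψ.symm_apply_apply]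
  · intro hp
    refine ⟨((ψ.symm p.1 : ↥N) : X), (ψ.symm p.1).2, ?_⟩
    show e ((ψ.symm p.1 : ↥N) : X) = p
    have h1' : (e ((ψ.symm p.1 : ↥N) : X)).1 = p.1 := by
      rw [← hψ_apply, ψ.apply_symm_apply]
    have h2' : (e ((ψ.symm p.1 : ↥N) : X)).2 = p.2 := by
      rw [hp]; exact (hS_apply p.1).symm
    exact Prod.ext h1' h2'

theorem stmt_14 {X : Type u} [NormedAddCommGroup X] [NormedSpace ℝ X] [CompleteSpace X]
    (M N : Submodule ℝ X) (hM : IsClosed (M : Set X)) (hN : IsClosed (N : Set X)) :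
    (∃ K : Submodule ℝ X, IsClosed (K : Set X) ∧
        M ⊓ K = ⊥ ∧ M ⊔ K = ⊤ ∧ N ⊓ K = ⊥ ∧ N ⊔ K = ⊤) ↔
      ∃ (X₁ X₂ : Type u) (_ : NormedAddCommGroup X₁) (_ : NormedSpace ℝ X₁)
        (_ : CompleteSpace X₁) (_ : NormedAddCommGroup X₂) (_ : NormedSpace ℝ X₂)
        (_ : CompleteSpace X₂) (T S : X₁ →L[ℝ] X₂) (e : X ≃L[ℝ] X₁ × X₂),
        Submodule.map ((e : X →L[ℝ] X₁ × X₂) : X →ₗ[ℝ] X₁ × X₂) M = LinearMap.graph (T : X₁ →ₗ[ℝ] X₂) ∧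
        Submodule.map ((e : X →L[ℝ] X₁ × X₂) : X →ₗ[ℝ] X₁ × X₂) N = LinearMap.graph (S : X₁ →ₗ[ℝ] X₂) := by
  constructor
  · rintro ⟨K, hK, hMK1, hMK2, hNK1, hNK2⟩
    haveI : CompleteSpace M := hM.completeSpace_coe
    haveI : CompleteSpace K := hK.completeSpace_coe
    have hMKc : IsCompl M K := ⟨disjoint_iff.mpr hMK1, codisjoint_iff.mpr hMK2⟩
    set e₁ : (↥M × ↥K) ≃ₗ[ℝ] X := Submodule.prodEquivOfIsCompl M K hMKc with he₁
    have hcont : Continuous e₁ := by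
      have : ⇑e₁ = fun x : ↥M × ↥K => (x.1 : X) + (x.2 : X) := by
        funext x; rfl
      rw [this]
      exact (continuous_subtype_val.comp continuous_fst).add
        (continuous_subtype_val.comp continuous_snd)
    set e₂ : (↥M × ↥K) ≃L[ℝ] X := e₁.toContinuousLinearEquivOfContinuous hcont with he₂
    set e : X ≃L[ℝ] ↥M × ↥K := e₂.symm with heq
    have he : ∀ (a : ↥M) (b : ↥K), e ((a : X) + (b : X)) = (a, b) := by
      intro a b
      have : e₂ (a, b) = (a : X) + (b : X) := rfl
      rw [heq, ← this, e₂.symm_apply_apply]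
    obtain ⟨T, hT⟩ := aux14 hM e he M hM hMK1 hMK2
    obtain ⟨S, hS⟩ := aux14 hM e he N hN hNK1 hNK2
    exact ⟨↥M, ↥K, inferInstance, inferInstance, inferInstance, inferInstance, inferInstance,
      inferInstance, T, S, e, hT, hS⟩
  · rintro ⟨X₁, X₂, i1, i2, i3, i4, i5, i6, T, S, e, hT, hS⟩
    set K : Submodule ℝ X :=
      Submodule.comap ((e : X →L[ℝ] X₁ × X₂) : X →ₗ[ℝ] X₁ × X₂) ((⊥ : Submodule ℝ X₁).prod ⊤) with hKdef
    have hKmem : ∀ x : X, x ∈ K ↔ (e x).1 = 0 := by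
      intro x
      simp [hKdef, Submodule.mem_prod]
    have hKclosed : IsClosed (K : Set X) := by
      have : (K : Set X) = (⇑e) ⁻¹' ({x : X₁ × X₂ | x.1 = 0}) := by
        ext x; simp [hKmem x]
      rw [this]
      exact IsClosed.preimage e.continuous (isClosed_eq continuous_fst continuous_const)
    -- generic complement argument
    have key : ∀ (P : Submodule ℝ X) (F : X₁ →L[ℝ] X₂),
        Submodule.map ((e : X →L[ℝ] X₁ × X₂) : X →ₗ[ℝ] X₁ × X₂) P = LinearMap.graph (F : X₁ →ₗ[ℝ] X₂) →
        P ⊓ K = ⊥ ∧ P ⊔ K = ⊤ := by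
      intro P F hP
      have hmemP : ∀ x : X, x ∈ P ↔ (e x).2 = F (e x).1 := by
        intro x
        constructor
        · intro hx
          have : e x ∈ Submodule.map ((e : X →L[ℝ] X₁ × X₂) : X →ₗ[ℝ] X₁ × X₂) P := ⟨x, hx, rfl⟩
          rw [hP] at this
          exact (LinearMap.mem_graph_iff _ _).mp this
        · intro hx
          have : e x ∈ LinearMap.graph (F : X₁ →ₗ[ℝ] X₂) := (LinearMap.mem_graph_iff _ _).mpr hx
          rw [← hP] at this
          obtain ⟨y, hy, hyx⟩ := this
          have : y = x := e.injective hyx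
          rwa [← this]
      constructor
      · rw [eq_bot_iff]
        rintro x ⟨hxP, hxK⟩
        have h1 := (hmemP x).mp hxP
        have h2 := (hKmem x).mp hxK
        have : e x = 0 := by
          have : (e x).2 = 0 := by rw [h1, h2, map_zero]
          exact Prod.ext h2 this
        have : x = 0 := by
          have := congrArg e.symm this
          rwa [e.symm_apply_apply, map_zero] at this
        simp [this]
      · rw [eq_top_iff]
        intro x _
        set y : X := e.symm ((e x).1, F (e x).1) with hy
        have hyP : y ∈ P := by
          rw [hmemP, hy, e.apply_symm_apply]
        have hxyK : x - y ∈ K := by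
          rw [hKmem]
          rw [map_sub, hy, e.apply_symm_apply]
          simp
        have : x = y + (x - y) := by abel
        rw [this]
        exact Submodule.add_mem_sup hyP hxyK
    obtain ⟨hMK1, hMK2⟩ := key M T hT
    obtain ⟨hNK1, hNK2⟩ := key N S hS
    exact ⟨K, hKclosed, hMK1, hMK2, hNK1, hNK2⟩
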